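/- Let χ_i ∈ ℂ \ {0} for −n ≤ i ≤ n with χ_0 = 1, and let K = diag(χ_{−n}, …, χ_{−1}, 1, χ_1, …, χ_n) ∈ M_N(ℂ). Fix u, v ∈ ℂ with u − v ≠ 0 and u − v + cκ ≠ 0. Then R(u,v) · (K ⊗ K) = (K ⊗ K) · R(u,v) if and only if χ_{−i} = χ_i^{−1} for all i = 1, …, n. -/

import Mathlib

open scoped Kronecker

noncomputable section

/-- Index set `{-n, …, n}` for matrices of size `N = 2n+1`. -/
abbrev Idx (n : ℕ) : Type := {i : ℤ // i ∈ Finset.Icc (-(n : ℤ)) (n : ℤ)}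

/-- Negation `i ↦ -i` on the index set. -/
def Idx.neg {n : ℕ} (i : Idx n) : Idx n :=
  ⟨-i.1, by
    have h := Finset.mem_Icc.mp i.2
    exact Finset.mem_Icc.mpr ⟨by omega, by omega⟩⟩

/-- Matrix unit `e_{i,j}`. -/
def matE {n : ℕ} (i j : Idx n) : Matrix (Idx n) (Idx n) ℂ :=
  Matrix.single i j 1

/-- `P = Σ_{i,j} e_{i,j} ⊗ e_{j,i}`. -/
def Pmat (n : ℕ) : Matrix (Idx n × Idx n) (Idx n × Idx n) ℂ :=
  ∑ i : Idx n, ∑ j : Idx n, matE i j ⊗ₖ matE j i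

/-- `Q = Σ_{i,j} e_{i,j} ⊗ e_{-i,-j}`. -/
def Qmat (n : ℕ) : Matrix (Idx n × Idx n) (Idx n × Idx n) ℂ :=
  ∑ i : Idx n, ∑ j : Idx n, matE i j ⊗ₖ matE i.neg j.neg

/-- `κ = n - 1/2`. -/
def kappa (n : ℕ) : ℂ := (n : ℂ) - 1 / 2

/-- The `o_{2n+1}`-invariant `R`-matrix
`R(u,v) = I⊗I + (c/(u−v)) P − (c/(u−v+cκ)) Q`. -/
def Rmat (n : ℕ) (c u v : ℂ) : Matrix (Idx n × Idx n) (Idx n × Idx n) ℂ :=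
  1 + (c / (u - v)) • Pmat n - (c / (u - v + c * kappa n)) • Qmat n


lemma matE_apply {n : ℕ} (i j a b : Idx n) :
    matE i j a b = if i = a ∧ j = b then 1 else 0 := rfl

lemma Pmat_apply {n : ℕ} (p q : Idx n × Idx n) :
    Pmat n p q = if p.1 = q.2 ∧ p.2 = q.1 then 1 else 0 := by
  simp only [Pmat, Matrix.sum_apply, Matrix.kroneckerMap_apply, matE_apply,
    ite_mul, mul_ite, one_mul, mul_one, zero_mul, mul_zero]
  rw [Finset.sum_comm]
  rw [Finset.sum_eq_single p.2]
  · rw [Finset.sum_eq_single q.2] <;> aesop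
  · intro b _ hb
    apply Finset.sum_eq_zero; aesop
  · aesop

lemma Qmat_apply {n : ℕ} (p q : Idx n × Idx n) :
    Qmat n p q = if p.2 = p.1.neg ∧ q.2 = q.1.neg then 1 else 0 := by
  simp only [Qmat, Matrix.sum_apply, Matrix.kroneckerMap_apply, matE_apply,
    ite_mul, mul_ite, one_mul, mul_one, zero_mul, mul_zero]
  rw [Finset.sum_eq_single p.1]
  · rw [Finset.sum_eq_single q.1] <;> aesop
  · intro b _ hb
    apply Finset.sum_eq_zero; aesop
  · aesop

lemma Rmat_apply {n : ℕ} (c u v : ℂ) (p q : Idx n × Idx n) :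
    Rmat n c u v p q = (if p = q then 1 else 0)
      + (c / (u - v)) * (if p.1 = q.2 ∧ p.2 = q.1 then 1 else 0)
      - (c / (u - v + c * kappa n)) * (if p.2 = p.1.neg ∧ q.2 = q.1.neg then 1 else 0) := by
  simp [Rmat, Matrix.sub_apply, Matrix.add_apply, Matrix.smul_apply, Pmat_apply, Qmat_apply,
    Matrix.one_apply, smul_eq_mul]

/-- for a diagonal matrix `K = diag(χ_{-n},…,χ_n)` with nonzero
entries and `χ_0 = 1`, one has `R(u,v)·(K ⊗ K) = (K ⊗ K)·R(u,v)` if and only if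
`χ_{-i} = χ_i⁻¹` for all `i = 1, …, n`. -/
theorem statement3 (n : ℕ) (hn : 1 ≤ n) (c : ℂ) (hc : c ≠ 0)
    (χ : ℤ → ℂ) (hχ0 : χ 0 = 1)
    (hχ : ∀ i : ℤ, -(n : ℤ) ≤ i → i ≤ (n : ℤ) → χ i ≠ 0)
    (u v : ℂ) (h0 : u - v ≠ 0) (h1 : u - v + c * kappa n ≠ 0) :
    (Rmat n c u v *
        (Matrix.diagonal (fun i : Idx n => χ i.1) ⊗ₖ Matrix.diagonal (fun i : Idx n => χ i.1)) =
      (Matrix.diagonal (fun i : Idx n => χ i.1) ⊗ₖ Matrix.diagonal (fun i : Idx n => χ i.1)) *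
        Rmat n c u v) ↔
      (∀ i : ℤ, 1 ≤ i → i ≤ (n : ℤ) → χ (-i) = (χ i)⁻¹) := by
  have hb : c / (u - v + c * kappa n) ≠ 0 := div_ne_zero hc h1
  rw [Matrix.diagonal_kronecker_diagonal]
  constructor
  · intro H i hi1 hi2
    have hz : (0 : ℤ) ∈ Finset.Icc (-(n : ℤ)) (n : ℤ) := Finset.mem_Icc.mpr ⟨by omega, by omega⟩
    have hii : i ∈ Finset.Icc (-(n : ℤ)) (n : ℤ) := Finset.mem_Icc.mpr ⟨by omega, by omega⟩
    have key := Matrix.ext_iff.mpr H (⟨i, hii⟩, Idx.neg ⟨i, hii⟩) (⟨0, hz⟩, ⟨0, hz⟩)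
    rw [Matrix.mul_diagonal, Matrix.diagonal_mul, Rmat_apply] at key
    have hi0 : i ≠ 0 := by omega
    simp only [Idx.neg, Prod.mk.injEq, Subtype.mk.injEq, hi0, false_and, if_false, neg_neg,
      neg_zero, and_true, true_and, if_true, hχ0, mul_one, one_mul, and_self, ite_true] at key
    have h2 : χ i * χ (-i) = 1 := by
      apply mul_right_cancel₀ hb
      linear_combination key
    exact eq_inv_of_mul_eq_one_right h2
  · intro H
    have key : ∀ j : ℤ, -(n : ℤ) ≤ j → j ≤ (n : ℤ) → χ j * χ (-j) = 1 := by
      intro j hj1 hj2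
      rcases lt_trichotomy j 0 with h | h | h
      · have h' := H (-j) (by omega) (by omega)
        rw [neg_neg] at h'
        rw [h']
        exact inv_mul_cancel₀ (hχ (-j) (by omega) (by omega))
      · subst h; simp [hχ0]
      · rw [H j (by omega) hj2]
        exact mul_inv_cancel₀ (hχ j (by omega) (by omega))
    have kp : ∀ x : Idx n, χ x.1 * χ ((Idx.neg x).1) = 1 := by
      intro x
      have hx := Finset.mem_Icc.mp x.2
      simpa [Idx.neg] using key x.1 hx.1 hx.2
    ext p q
    rw [Matrix.mul_diagonal, Matrix.diagonal_mul, Rmat_apply]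
    rcases p with ⟨p1, p2⟩
    rcases q with ⟨q1, q2⟩
    simp only
    have eq1 : (if (p1, p2) = (q1, q2) then (1 : ℂ) else 0) * (χ q1.1 * χ q2.1)
        = (χ p1.1 * χ p2.1) * (if (p1, p2) = (q1, q2) then (1 : ℂ) else 0) := by
      split_ifs with h
      · rw [Prod.mk.injEq] at h
        rw [h.1, h.2]; ring
      · ring
    have eq2 : (if p1 = q2 ∧ p2 = q1 then (1 : ℂ) else 0) * (χ q1.1 * χ q2.1)
        = (χ p1.1 * χ p2.1) * (if p1 = q2 ∧ p2 = q1 then (1 : ℂ) else 0) := by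
      split_ifs with h
      · rw [h.1, h.2]; ring
      · ring
    have eq3 : (if p2 = p1.neg ∧ q2 = q1.neg then (1 : ℂ) else 0) * (χ q1.1 * χ q2.1)
        = (χ p1.1 * χ p2.1) * (if p2 = p1.neg ∧ q2 = q1.neg then (1 : ℂ) else 0) := by
      split_ifs with h
      · rw [h.1, h.2, kp p1, kp q1]
      · ring
    linear_combination eq1 + (c / (u - v)) * eq2 - (c / (u - v + c * kappa n)) * eq3

end
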